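/- arXiv:math/0607155 — 4 statements merged into one kernel-verified Lean document; each statement's English description precedes it below -/
import Mathlib

section
/- Let C be a triangulated category and suppose given objects X_0,…,X_{d+1} and triangles X_{i+1} → B_i → X_i →^{σ_i} X_{i+1}[1] for 0 ≤ i ≤ d such that Hom(X_0, B_i[i]) = 0 for all 1 ≤ i ≤ d and σ_0 ≠ 0. Then the composition σ_d[d] ∘ σ_{d-1}[d-1] ∘ ⋯ ∘ σ_1[1] ∘ σ_0 : X_0 → X_{d+1}[d+1] is nonzero. -/
/-!
STATEMENT 5: Let C be a triangulated category and suppose given objects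
X_0,…,X_{d+1} and distinguished triangles X_{i+1} → B_i → X_i →^{σ_i} X_{i+1}[1]
for 0 ≤ i ≤ d such that Hom(X_0, B_i[i]) = 0 for all 1 ≤ i ≤ d and σ_0 ≠ 0.
Then the composition σ_d[d] ∘ ⋯ ∘ σ_1[1] ∘ σ_0 : X_0 → X_{d+1}[d+1] is nonzero.
-/

open CategoryTheory CategoryTheory.Limits CategoryTheory.Pretriangulated

/-- The iterated composition `σ_{m-1}[m-1] ∘ ⋯ ∘ σ_1[1] ∘ σ_0 : X_0 ⟶ X_m[m]`
(composed with the canonical identifications of iterated shifts). -/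
noncomputable def shiftedChainComp {C : Type*} [Category C] [HasShift C ℤ]
    (X : ℕ → C) (σ : ∀ i : ℕ, X i ⟶ (X (i + 1))⟦(1 : ℤ)⟧) :
    ∀ m : ℕ, (X 0 ⟶ (X m)⟦(m : ℤ)⟧)
  | 0 => (shiftFunctorZero' C ((0 : ℕ) : ℤ) (by norm_num)).inv.app (X 0)
  | (m + 1) =>
      shiftedChainComp X σ m ≫ (σ m)⟦(m : ℤ)⟧' ≫
        ((shiftFunctorAdd' C (1 : ℤ) (m : ℤ) (((m + 1 : ℕ)) : ℤ)
          (by push_cast; ring)).inv.app (X (m + 1)))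

open CategoryTheory.Category in
/-- Key step: if `c : A ⟶ X₁⟦m⟧` is nonzero and `Hom(A, B⟦m⟧) = 0`, then
`c ≫ σ⟦m⟧' ≠ 0`. -/
lemma key_step {C : Type*} [Category C] [Preadditive C] [HasZeroObject C] [HasShift C ℤ]
    [∀ n : ℤ, (shiftFunctor C n).Additive] [Pretriangulated C]
    (m : ℤ) {A X₁ B X₂ : C} (g : X₂ ⟶ B) (f : B ⟶ X₁) (σ : X₁ ⟶ X₂⟦(1 : ℤ)⟧)
    (hT : Triangle.mk g f σ ∈ distTriang C)
    (hvan : ∀ φ : A ⟶ B⟦m⟧, φ = 0)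
    (c : A ⟶ X₁⟦m⟧) (hc : c ≠ 0) : c ≫ σ⟦m⟧' ≠ 0 := by
  intro h
  apply hc
  have hT' := Pretriangulated.Triangle.shift_distinguished _ hT m
  have hz : c ≫ ((Triangle.shiftFunctor C m).obj (Triangle.mk g f σ)).mor₃ = 0 := by
    dsimp [Triangle.shiftFunctor]
    show c ≫ (m.negOnePow • ((shiftFunctor C m).map σ ≫ (shiftFunctorComm C 1 m).hom.app X₂)) = 0
    rw [Units.smul_def, Preadditive.comp_zsmul, ← assoc, h, zero_comp, smul_zero]
  obtain ⟨h', hh'⟩ := Pretriangulated.Triangle.coyoneda_exact₃ _ hT' c hz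
  rw [hh', hvan h']
  exact zero_comp

theorem shiftedChainComp_ne_zero
    {C : Type*} [Category C] [Preadditive C] [HasZeroObject C] [HasShift C ℤ]
    [∀ n : ℤ, (shiftFunctor C n).Additive] [Pretriangulated C]
    (d : ℕ) (X : ℕ → C) (B : ℕ → C)
    (g : ∀ i : ℕ, X (i + 1) ⟶ B i) (f : ∀ i : ℕ, B i ⟶ X i)
    (σ : ∀ i : ℕ, X i ⟶ (X (i + 1))⟦(1 : ℤ)⟧)
    -- the triangles X_{i+1} → B_i → X_i → X_{i+1}[1] are distinguished
    (htri : ∀ i : ℕ, i ≤ d → Triangle.mk (g i) (f i) (σ i) ∈ distTriang C)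
    -- Hom(X_0, B_i[i]) = 0 for 1 ≤ i ≤ d
    (hvan : ∀ i : ℕ, 1 ≤ i → i ≤ d → ∀ φ : X 0 ⟶ (B i)⟦(i : ℤ)⟧, φ = 0)
    (hσ0 : σ 0 ≠ 0) :
    shiftedChainComp X σ (d + 1) ≠ 0 := by
  suffices H : ∀ m : ℕ, m ≤ d → shiftedChainComp X σ (m + 1) ≠ 0 from H d le_rfl
  intro m
  induction m with
  | zero =>
    intro _ h0
    apply hσ0
    rw [shiftedChainComp, shiftedChainComp] at h0
    rw [← Category.assoc] at h0
    simp only [Preadditive.IsIso.comp_right_eq_zero, Preadditive.IsIso.comp_left_eq_zero] at h0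
    exact (shiftFunctor C ((0 : ℕ) : ℤ)).map_injective (by rw [h0]; simp)
  | succ m ih =>
    intro hm h0
    have hc : shiftedChainComp X σ (m + 1) ≠ 0 := ih (le_trans (Nat.le_succ m) hm)
    have h1 : shiftedChainComp X σ (m + 1) ≫ (σ (m + 1))⟦((m + 1 : ℕ) : ℤ)⟧' = 0 := by
      rw [shiftedChainComp, ← Category.assoc] at h0
      simpa only [Preadditive.IsIso.comp_right_eq_zero] using h0
    exact key_step ((m + 1 : ℕ) : ℤ) (g (m + 1)) (f (m + 1)) (σ (m + 1)) (htri (m + 1) hm)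
      (hvan (m + 1) (Nat.le_add_left 1 m) hm) _ hc h1
end

section
/- Let C be a triangulated category, and suppose given triangles X_{i+1} → B_i → X_i →^{σ_i} X_{i+1}[1] for 0 ≤ i ≤ d with Hom(X_0, B_i[i]) = 0 for 1 ≤ i ≤ d and σ_0 ≠ 0. Then for all 0 ≤ i < j ≤ d+1, Hom(X_i, X_j[j−i]) ≠ 0. -/
/-!
STATEMENT 6: Let C be a triangulated category, and suppose given distinguished
triangles X_{i+1} → B_i → X_i →^{σ_i} X_{i+1}[1] for 0 ≤ i ≤ d with
Hom(X_i, B_j[j−i]) = 0 for i < j ≤ d and σ_0 ≠ 0. Then for all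
0 ≤ i < j ≤ d+1, Hom(X_i, X_j[j−i]) ≠ 0.
-/

open CategoryTheory CategoryTheory.Limits CategoryTheory.Pretriangulated

section Aux

variable {C : Type*} [Category C] [Preadditive C] [HasZeroObject C] [HasShift C ℤ]
  [∀ n : ℤ, (shiftFunctor C n).Additive] [Pretriangulated C]

/-- The composite `X i ⟶ X (i+n) ⟦n⟧` of the shifted connecting maps. -/
noncomputable def compSigma (X : ℕ → C) (σ : ∀ i : ℕ, X i ⟶ (X (i + 1))⟦(1 : ℤ)⟧)
    (i : ℕ) : ∀ n : ℕ, X i ⟶ (X (i + n))⟦(n : ℤ)⟧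
  | 0 => (shiftFunctorZero C ℤ).inv.app (X i)
  | (n+1) => compSigma X σ i n ≫ (σ (i + n))⟦(n : ℤ)⟧' ≫
      (shiftFunctorAdd' C 1 (n : ℤ) ((n+1 : ℕ) : ℤ) (by push_cast; ring)).inv.app (X (i + n + 1))

omit [HasZeroObject C] [∀ (n : ℤ), (shiftFunctor C n).Additive] [Pretriangulated C] in
lemma compSigma_succ_eq_zero_iff (X : ℕ → C) (σ : ∀ i : ℕ, X i ⟶ (X (i + 1))⟦(1 : ℤ)⟧)
    (i n : ℕ) :
    compSigma X σ i (n + 1) = 0 ↔ compSigma X σ i n ≫ (σ (i + n))⟦(n : ℤ)⟧' = 0 := by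
  show compSigma X σ i n ≫ (σ (i + n))⟦(n : ℤ)⟧' ≫ _ = 0 ↔ _
  rw [← Category.assoc, CategoryTheory.Preadditive.IsIso.comp_right_eq_zero]

omit [HasZeroObject C] [Pretriangulated C] in
lemma compSigma_one_eq_zero_iff (X : ℕ → C) (σ : ∀ i : ℕ, X i ⟶ (X (i + 1))⟦(1 : ℤ)⟧)
    (i : ℕ) :
    compSigma X σ i 1 = 0 ↔ σ (i + 0) = 0 := by
  rw [compSigma_succ_eq_zero_iff]
  show (shiftFunctorZero C ℤ).inv.app (X i) ≫ _ = 0 ↔ _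
  rw [CategoryTheory.Preadditive.IsIso.comp_left_eq_zero, CategoryTheory.Functor.map_eq_zero_iff]

lemma step_ne_zero {Y Z W A : C} {u : Y ⟶ Z} {v : Z ⟶ W} {w : W ⟶ Y⟦(1:ℤ)⟧}
    (hT : Triangle.mk u v w ∈ distTriang C) (n : ℤ)
    (hA : ∀ χ : A ⟶ Z⟦n⟧, χ = 0)
    (ψ : A ⟶ W⟦n⟧) (hψ : ψ ≠ 0) : ψ ≫ w⟦n⟧' ≠ 0 := by
  intro h0
  have hT' := Triangle.shift_distinguished _ hT n
  obtain ⟨χ, hχ⟩ := Triangle.coyoneda_exact₃ _ hT' ψ (by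
    change ψ ≫ (n.negOnePow • (w⟦n⟧' ≫ (shiftFunctorComm C 1 n).hom.app Y)) = 0
    rw [Linear.comp_units_smul, reassoc_of% h0, zero_comp, smul_zero])
  apply hψ
  rw [hχ, hA χ]
  exact zero_comp

end Aux

theorem hom_shift_ne_zero_of_exchange_triangles
    {C : Type*} [Category C] [Preadditive C] [HasZeroObject C] [HasShift C ℤ]
    [∀ n : ℤ, (shiftFunctor C n).Additive] [Pretriangulated C]
    (d : ℕ) (X : ℕ → C) (B : ℕ → C)
    (g : ∀ i : ℕ, X (i + 1) ⟶ B i) (f : ∀ i : ℕ, B i ⟶ X i)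
    (σ : ∀ i : ℕ, X i ⟶ (X (i + 1))⟦(1 : ℤ)⟧)
    -- the triangles X_{i+1} → B_i → X_i → X_{i+1}[1] are distinguished
    (htri : ∀ i : ℕ, i ≤ d → Triangle.mk (g i) (f i) (σ i) ∈ distTriang C)
    -- Hom(X_i, B_j[j−i]) = 0 for i < j ≤ d
    (hvan : ∀ i j : ℕ, i < j → j ≤ d → ∀ φ : X i ⟶ (B j)⟦((j - i : ℕ) : ℤ)⟧, φ = 0)
    (hσ0 : σ 0 ≠ 0) :
    ∀ i j : ℕ, i < j → j ≤ d + 1 →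
      ∃ φ : X i ⟶ (X j)⟦((j - i : ℕ) : ℤ)⟧, φ ≠ 0 := by
  -- restated vanishing
  have hvan' : ∀ i m : ℕ, 1 ≤ m → i + m ≤ d →
      ∀ χ : X i ⟶ (B (i + m))⟦(m : ℤ)⟧, χ = 0 := by
    intro i m h1 h2 χ
    have e : i + m - i = m := by omega
    have := hvan i (i + m) (by omega) h2
    rw [e] at this
    exact this χ
  -- if σ (i+n) = 0 then compSigma X σ i (n+1) = 0
  have vanish : ∀ j n i : ℕ, i + n = j → σ j = 0 → compSigma X σ i (n + 1) = 0 := by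
    intro j n i hji h
    subst hji
    rw [compSigma_succ_eq_zero_iff, h, Functor.map_zero, comp_zero]
  -- base case: compSigma i 1 ≠ 0 when σ i ≠ 0
  have base : ∀ i : ℕ, σ i ≠ 0 → compSigma X σ i 1 ≠ 0 := by
    intro i hσ h0
    rw [compSigma_one_eq_zero_iff] at h0
    exact hσ h0
  -- inductive step using the vanishing hypothesis
  have step : ∀ i n : ℕ, i + n ≤ d →
      (∀ χ : X i ⟶ (B (i + n))⟦(n : ℤ)⟧, χ = 0) →
      compSigma X σ i n ≠ 0 → compSigma X σ i (n + 1) ≠ 0 := by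
    intro i n hle hA hne h0
    rw [compSigma_succ_eq_zero_iff] at h0
    exact step_ne_zero (htri (i + n) hle) (n : ℤ) hA (compSigma X σ i n) hne h0
  -- Hom(X 0, ·) chain: compSigma 0 (n+1) ≠ 0 for n ≤ d
  have chain0 : ∀ n : ℕ, n ≤ d → compSigma X σ 0 (n + 1) ≠ 0 := by
    intro n
    induction n with
    | zero =>
        intro _
        refine base 0 ?_
        intro h
        apply hσ0
        exact h
    | succ n ih =>
        intro hle
        exact step 0 (n + 1) (by omega) (hvan' 0 (n + 1) (by omega) (by omega)) (ih (by omega))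
  -- hence σ i ≠ 0 for all i ≤ d
  have σne : ∀ i : ℕ, i ≤ d → σ i ≠ 0 := by
    intro i hi h
    exact chain0 i hi (vanish i i 0 (Nat.zero_add i) h)
  -- general chain
  have chain : ∀ m i : ℕ, 1 ≤ m → i + m ≤ d + 1 → compSigma X σ i m ≠ 0 := by
    intro m
    induction m with
    | zero => omega
    | succ m ih =>
        intro i _ hle
        rcases Nat.eq_zero_or_pos m with rfl | hm
        · exact base i (σne i (by omega))
        · exact step i m (by omega) (hvan' i m hm (by omega)) (ih i hm (by omega))
  intro i j hij hj
  obtain ⟨m, rfl⟩ : ∃ m, j = i + m := ⟨j - i, (Nat.add_sub_cancel' hij.le).symm⟩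
  have e : i + m - i = m := by omega
  rw [e]
  exact ⟨compSigma X σ i m, chain m i (by omega) hj⟩
end

section
/- Let H be the representation category of a valued quiver with n vertices, and d ≥ 1. Any basic exceptional object M of the d-cluster category C_d(H) (i.e. Ext^i(M,M) = 0 for 1 ≤ i ≤ d, with pairwise non-isomorphic indecomposable summands) has at most (d+1)·n indecomposable direct summands. -/
/-!
STATEMENT 12: Let H be the representation category of a valued quiver with n
vertices, and d ≥ 1. Any basic exceptional object M of the d-cluster category
C_d(H) (i.e. Ext^i(M,M) = 0 for 1 ≤ i ≤ d, with pairwise non-isomorphic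
indecomposable summands) has at most (d+1)·n indecomposable direct summands.

C_d(H) is modelled as a category C with shift; `inH` singles out the objects of
(the image of) H; by the classification, every indecomposable (exceptional)
object of C_d(H) is a shift Y⟦k⟧ (0 ≤ k ≤ d) of some Y in H, and any family of
pairwise non-isomorphic objects of H with no self-extensions has at most n
members (a basic exceptional object of the hereditary category H has at most n
indecomposable summands).
-/

open CategoryTheory CategoryTheory.Limits

theorem basic_exceptional_has_at_most_summands
    {C : Type*} [Category C] [Preadditive C] [HasShift C ℤ]
    (n d : ℕ) (hd : 1 ≤ d)
    -- the objects of C_d(H) lying in (the image of) H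
    (inH : C → Prop)
    -- hereditary bound: a basic exceptional family inside H has at most n members
    (hbound : ∀ (m : ℕ) (f : Fin m → C), (∀ a, inH (f a)) →
      (∀ a b, a ≠ b → IsEmpty (f a ≅ f b)) →
      (∀ a b, ∀ φ : f a ⟶ (f b)⟦(1 : ℤ)⟧, φ = 0) → m ≤ n)
    -- the basic exceptional object M, given by its indecomposable summands M_1,…,M_m
    (m : ℕ) (M : Fin m → C)
    -- M is basic: the summands are pairwise non-isomorphic
    (hbasic : ∀ a b, a ≠ b → IsEmpty (M a ≅ M b))
    -- M is exceptional: Ext^k(M_a, M_b) = 0 for 1 ≤ k ≤ d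
    (hexc : ∀ a b, ∀ k : ℤ, 1 ≤ k → k ≤ (d : ℤ) → ∀ φ : M a ⟶ (M b)⟦k⟧, φ = 0)
    -- classification: each summand is a shift Y⟦k⟧, 0 ≤ k ≤ d, of some Y in H
    (hdecomp : ∀ a, ∃ (Y : C) (k : ℕ), inH Y ∧ k ≤ d ∧ Nonempty (M a ≅ Y⟦(k : ℤ)⟧)) :
    m ≤ (d + 1) * n := by
  classical
  choose Y k hY hk he using hdecomp
  have e : ∀ a, M a ≅ (Y a)⟦(k a : ℤ)⟧ := fun a => (he a).some
  set ℓ : Fin m → Fin (d + 1) := fun a => ⟨k a, Nat.lt_succ_of_le (hk a)⟩ with hℓ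
  -- each fiber of ℓ has at most n elements
  have hfiber : ∀ j : Fin (d + 1),
      (Finset.univ.filter (fun a => ℓ a = j)).card ≤ n := by
    intro j
    set s := Finset.univ.filter (fun a => ℓ a = j) with hs
    set g : Fin s.card → Fin m := fun i => (s.equivFin.symm i).1 with hg
    have hgs : ∀ i, g i ∈ s := fun i => (s.equivFin.symm i).2
    have hgk : ∀ i, k (g i) = (j : ℕ) := by
      intro i
      have := (Finset.mem_filter.mp (hgs i)).2
      exact congrArg Fin.val this
    have hginj : Function.Injective g := by
      intro a b hab
      have : s.equivFin.symm a = s.equivFin.symm b := Subtype.ext hab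
      exact s.equivFin.symm.injective this
    refine hbound s.card (fun i => Y (g i)) (fun i => hY _) ?_ ?_
    · intro a b hab
      constructor
      intro iso
      have hne : g a ≠ g b := fun h => hab (hginj h)
      have hkk : (k (g b) : ℤ) = (k (g a) : ℤ) := by
        rw [hgk a, hgk b]
      have iso2 : M (g a) ≅ M (g b) :=
        e (g a) ≪≫ (shiftFunctor C (k (g a) : ℤ)).mapIso iso ≪≫ (hkk ▸ e (g b)).symm
      exact (hbasic _ _ hne).false iso2
    · intro a b φ
      set K : ℤ := (k (g a) : ℤ) with hK
      have hkk : (k (g b) : ℤ) = K := by rw [hK, hgk a, hgk b]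
      have e2 : M (g b) ≅ (Y (g b))⟦K⟧ := hkk ▸ e (g b)
      set F := shiftFunctor C K with hF
      have hzero : ∀ ψ : (Y (g a))⟦K⟧ ⟶ ((Y (g b))⟦(1 : ℤ)⟧)⟦K⟧, ψ = 0 := by
        intro ψ
        have hχ : (e (g a)).hom ≫ ψ ≫ (shiftComm (Y (g b)) 1 K).hom ≫
            (shiftFunctor C (1 : ℤ)).map e2.inv = 0 :=
          hexc (g a) (g b) 1 le_rfl (by exact_mod_cast hd) _
        calc ψ = (e (g a)).inv ≫ ((e (g a)).hom ≫ ψ ≫ (shiftComm (Y (g b)) 1 K).hom ≫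
                  (shiftFunctor C (1 : ℤ)).map e2.inv) ≫
                  (shiftFunctor C (1 : ℤ)).map e2.hom ≫ (shiftComm (Y (g b)) 1 K).inv := by
              simp [← Functor.map_comp]
          _ = 0 := by rw [hχ]; simp
      have h1 : F.map φ = 0 := hzero _
      have h2 : F.map (0 : Y (g a) ⟶ (Y (g b))⟦(1 : ℤ)⟧) = 0 := hzero _
      exact F.map_injective (h1.trans h2.symm)
  -- counting
  have := Finset.card_eq_sum_card_fiberwise
    (f := ℓ) (s := (Finset.univ : Finset (Fin m))) (t := Finset.univ)
    (fun a _ => Finset.mem_univ _)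
  calc m = (Finset.univ : Finset (Fin m)).card := (by simp)
    _ = ∑ j : Fin (d + 1), (Finset.univ.filter (fun a => ℓ a = j)).card := this
    _ ≤ ∑ _j : Fin (d + 1), n := Finset.sum_le_sum (fun j _ => hfiber j)
    _ = (d + 1) * n := by simp [Finset.sum_const, Finset.card_univ, mul_comm]
end

section
/- Let Φ be a root system, H the representation category of a corresponding valued quiver, and d ≥ 1. Define the d-compatibility degree of colored almost positive real Schur roots α, β by (α‖β)_{d,H} = length over End(M_α) of Ext^1_{C_d(H)}(M_α, ⊕_{i=0}^{d-1} M_β[i]), where M_α, M_β are the indecomposable exceptional objects of C_d(H) corresponding to α, β. Then (α‖β)_{d,H} = 0 if and only if (β‖α)_{d,H} = 0. -/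
/-!
STATEMENT 16: Define the d-compatibility degree of colored almost positive real
Schur roots α, β by (α‖β)_{d,H} = length over End(M_α) of
Ext^1_{C_d(H)}(M_α, ⊕_{i=0}^{d-1} M_β[i]), where M_α, M_β are the
indecomposable exceptional objects of C_d(H) corresponding to α, β. Then
(α‖β)_{d,H} = 0 if and only if (β‖α)_{d,H} = 0.

C_d(H) is modelled as a (d+1)-Calabi–Yau triangulated category C; since the
length of a module vanishes iff the module is zero, the condition
(α‖β)_{d,H} = 0 is the vanishing of the group Ext^1(M_α, ⊕_{i=0}^{d-1} M_β[i])
= Hom(M_α, (⊕_{i=0}^{d-1} M_β⟦i⟧)⟦1⟧).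
-/

open CategoryTheory CategoryTheory.Limits CategoryTheory.Pretriangulated

section Aux
variable {C : Type*} [Category C] [Preadditive C] [HasZeroObject C]
    [HasFiniteBiproducts C] [HasShift C ℤ]
    [∀ k : ℤ, (shiftFunctor C k).Additive] [Pretriangulated C]

/-- all maps vanish -/
def HZ (X Y : C) : Prop := ∀ f : X ⟶ Y, f = 0

lemma hz_shift (X Y : C) (a : ℤ) : HZ X Y ↔ HZ (X⟦a⟧) (Y⟦a⟧) := by
  constructor
  · intro h g
    rw [← (shiftFunctor C a).map_preimage g,
      h ((shiftFunctor C a).preimage g), Functor.map_zero]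
  · intro h f
    apply (shiftFunctor C a).map_injective
    rw [Functor.map_zero]
    exact h _

lemma hz_src {X X' : C} (Y : C) (e : X ≅ X') : HZ X Y ↔ HZ X' Y := by
  constructor
  · intro h f
    have h0 : e.hom ≫ f = 0 := h _
    calc f = e.inv ≫ (e.hom ≫ f) := by simp
    _ = 0 := by rw [h0]; simp
  · intro h f
    have h0 : e.inv ≫ f = 0 := h _
    calc f = e.hom ≫ (e.inv ≫ f) := by simp
    _ = 0 := by rw [h0]; simp

lemma hz_tgt (X : C) {Y Y' : C} (e : Y ≅ Y') : HZ X Y ↔ HZ X Y' := by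
  constructor
  · intro h f
    have h0 : f ≫ e.inv = 0 := h _
    calc f = (f ≫ e.inv) ≫ e.hom := by simp
    _ = 0 := by rw [h0]; simp
  · intro h f
    have h0 : f ≫ e.hom = 0 := h _
    calc f = (f ≫ e.hom) ≫ e.inv := by simp
    _ = 0 := by rw [h0]; simp

lemma hz_biprod (X : C) {n : ℕ} (F : Fin n → C) :
    HZ X (⨁ F) ↔ ∀ i, HZ X (F i) := by
  constructor
  · intro h i f
    have h0 : f ≫ biproduct.ι F i = 0 := h _
    calc f = (f ≫ biproduct.ι F i) ≫ biproduct.π F i := by simp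
    _ = 0 := by rw [h0]; simp
  · intro h f
    apply biproduct.hom_ext
    intro i
    rw [h i (f ≫ biproduct.π F i), zero_comp]

/-- reduction: Hom(X, (⊕ Y⟦i⟧)⟦1⟧) = 0 ↔ ∀ i < d, Ext^{i+1}(X,Y) = 0 -/
lemma hz_reduce (X Y : C) (d : ℕ) :
    HZ X ((⨁ fun i : Fin d => Y⟦((i : ℕ) : ℤ)⟧)⟦(1 : ℤ)⟧) ↔
      ∀ i : Fin d, HZ X (Y⟦((i : ℕ) : ℤ) + 1⟧) := by
  calc HZ X ((⨁ fun i : Fin d => Y⟦((i : ℕ) : ℤ)⟧)⟦(1 : ℤ)⟧)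
      ↔ HZ (X⟦(-1 : ℤ)⟧) (((⨁ fun i : Fin d => Y⟦((i : ℕ) : ℤ)⟧)⟦(1 : ℤ)⟧)⟦(-1 : ℤ)⟧) :=
        hz_shift _ _ (-1)
    _ ↔ HZ (X⟦(-1 : ℤ)⟧) (⨁ fun i : Fin d => Y⟦((i : ℕ) : ℤ)⟧) :=
        hz_tgt _ ((shiftFunctorCompIsoId C (1 : ℤ) (-1) (by ring)).app _)
    _ ↔ ∀ i : Fin d, HZ (X⟦(-1 : ℤ)⟧) (Y⟦((i : ℕ) : ℤ)⟧) := hz_biprod _ _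
    _ ↔ ∀ i : Fin d, HZ X (Y⟦((i : ℕ) : ℤ) + 1⟧) := by
        apply forall_congr'
        intro i
        calc HZ (X⟦(-1 : ℤ)⟧) (Y⟦((i : ℕ) : ℤ)⟧)
            ↔ HZ ((X⟦(-1 : ℤ)⟧)⟦(1 : ℤ)⟧) ((Y⟦((i : ℕ) : ℤ)⟧)⟦(1 : ℤ)⟧) :=
              hz_shift _ _ 1
          _ ↔ HZ X ((Y⟦((i : ℕ) : ℤ)⟧)⟦(1 : ℤ)⟧) :=
              hz_src _ ((shiftFunctorCompIsoId C (-1 : ℤ) 1 (by ring)).app X)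
          _ ↔ HZ X (Y⟦((i : ℕ) : ℤ) + 1⟧) :=
              hz_tgt _ (((shiftFunctorAdd' C ((i : ℕ) : ℤ) 1 (((i : ℕ) : ℤ) + 1) rfl).app Y).symm)

end Aux

theorem dCompatibilityDegree_zero_symm
    {C : Type*} [Category C] [Preadditive C] [HasZeroObject C]
    [HasFiniteBiproducts C] [HasShift C ℤ]
    [∀ k : ℤ, (shiftFunctor C k).Additive] [Pretriangulated C]
    (d : ℕ) (hd : 1 ≤ d)
    -- the (d+1)-Calabi–Yau property: Ext^j(Y,X) ≅ D Ext^{d+1−j}(X,Y), so that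
    -- Ext^j(X,Y) vanishes iff Ext^{d+1-j}(Y,X) does
    (hCY : ∀ (X Y : C) (j : ℤ), 1 ≤ j → j ≤ (d : ℤ) →
      ((∀ f : X ⟶ Y⟦j⟧, f = 0) ↔ (∀ f : Y ⟶ X⟦((d : ℤ) + 1 - j)⟧, f = 0)))
    -- the indecomposable exceptional objects corresponding to α and β
    (Mα Mβ : C) :
    -- (α‖β)_{d,H} = 0 ↔ (β‖α)_{d,H} = 0
    ((∀ f : Mα ⟶ (⨁ fun i : Fin d => Mβ⟦((i : ℕ) : ℤ)⟧)⟦(1 : ℤ)⟧, f = 0) ↔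
      (∀ f : Mβ ⟶ (⨁ fun i : Fin d => Mα⟦((i : ℕ) : ℤ)⟧)⟦(1 : ℤ)⟧, f = 0)) := by
  have key : ∀ X Y : C,
      (∀ f : X ⟶ (⨁ fun i : Fin d => Y⟦((i : ℕ) : ℤ)⟧)⟦(1 : ℤ)⟧, f = 0) ↔
      (∀ j : ℤ, 1 ≤ j → j ≤ (d : ℤ) → HZ X (Y⟦j⟧)) := by
    intro X Y
    rw [show (∀ f : X ⟶ (⨁ fun i : Fin d => Y⟦((i : ℕ) : ℤ)⟧)⟦(1 : ℤ)⟧, f = 0) ↔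
        HZ X ((⨁ fun i : Fin d => Y⟦((i : ℕ) : ℤ)⟧)⟦(1 : ℤ)⟧) from Iff.rfl,
      hz_reduce]
    constructor
    · intro h j h1 h2
      have hlt : (j - 1).toNat < d := by omega
      have := h ⟨(j - 1).toNat, hlt⟩
      simp only [Fin.val_mk] at this
      rwa [show (((j - 1).toNat : ℤ)) + 1 = j by omega] at this
    · intro h i
      exact h ((i : ℕ) + 1) (by omega) (by exact_mod_cast i.2)
  rw [key, key]
  constructor
  · intro h j h1 h2
    have := (hCY Mα Mβ ((d : ℤ) + 1 - j) (by omega) (by omega)).mp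
      (h ((d : ℤ) + 1 - j) (by omega) (by omega))
    rwa [show (d : ℤ) + 1 - ((d : ℤ) + 1 - j) = j by ring] at this
  · intro h j h1 h2
    have := (hCY Mβ Mα ((d : ℤ) + 1 - j) (by omega) (by omega)).mp
      (h ((d : ℤ) + 1 - j) (by omega) (by omega))
    rwa [show (d : ℤ) + 1 - ((d : ℤ) + 1 - j) = j by ring] at this
end
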